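/- Let X ∈ ℝ^{n×p} (n even, n = 2m) be such that X_{k+m} = −X_k for all k ∈ [m], and let X^k = X + η e_k v(k)ᵀ where v(k) = X_k/‖X_k‖ and η > 0. Then the minimum over all rigid transformations g(x) = Qx + w of the maximum row deviation satisfies min_{g ∈ E(p)} max_{i ∈ [n]} ‖X^k_i − g(X_i)‖ ≥ η/2. -/

import Mathlib

open Matrix

/-- Euclidean norm of a vector. -/
noncomputable def vnorm {n : ℕ} (v : Fin n → ℝ) : ℝ := Real.sqrt (∑ i, v i ^ 2)

noncomputable def toE {p : ℕ} (v : Fin p → ℝ) : EuclideanSpace ℝ (Fin p) := (WithLp.equiv 2 _).symm v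

lemma vnorm_eq {p : ℕ} (v : Fin p → ℝ) : vnorm v = ‖toE v‖ := by
  rw [EuclideanSpace.norm_eq]
  simp [vnorm, toE, Real.norm_eq_abs, sq_abs]

lemma key {p : ℕ} (Q : Matrix (Fin p) (Fin p) ℝ) (hQ : Qᵀ * Q = 1) (v : Fin p → ℝ) :
    (Q *ᵥ v) ⬝ᵥ (Q *ᵥ v) = v ⬝ᵥ v := by
  calc (Q *ᵥ v) ⬝ᵥ (Q *ᵥ v) = ((Q *ᵥ v) ᵥ* Q) ⬝ᵥ v := Matrix.dotProduct_mulVec _ _ _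
    _ = (Qᵀ *ᵥ (Q *ᵥ v)) ⬝ᵥ v := by rw [Matrix.mulVec_transpose]
    _ = ((Qᵀ * Q) *ᵥ v) ⬝ᵥ v := by rw [Matrix.mulVec_mulVec]
    _ = v ⬝ᵥ v := by rw [hQ, Matrix.one_mulVec]

lemma vnorm_mulVec {p : ℕ} (Q : Matrix (Fin p) (Fin p) ℝ) (hQ : Qᵀ * Q = 1) (v : Fin p → ℝ) :
    vnorm (Q *ᵥ v) = vnorm v := by
  unfold vnorm
  congr 1
  have := key Q hQ v
  simpa [dotProduct, sq] using this

/-- Separation of the perturbed configuration `X^k = X + η e_k v(k)ᵀ` (with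
`v(k) = X_k/‖X_k‖`) from `X` in the uniform (ℓ_{2→∞}) reconstruction loss: for a
configuration with `X_{k+m} = −X_k` (rows indexed by `Fin m ⊕ Fin m`), for every
rigid motion `g(x) = Qx + w` some row of `X^k − g(X)` has norm at least `η/2`;
hence `min_{g ∈ E(p)} max_i ‖X^k_i − g(X_i)‖ ≥ η/2`. -/
theorem stmt14 (m p : ℕ) (η : ℝ) (hη : 0 < η)
    (X : Matrix (Fin m ⊕ Fin m) (Fin p) ℝ)
    (hsym : ∀ (k : Fin m) (j : Fin p), X (Sum.inr k) j = - X (Sum.inl k) j)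
    (k : Fin m) (hXk : X (Sum.inl k) ≠ 0) :
    ∀ (Q : Matrix (Fin p) (Fin p) ℝ) (w : Fin p → ℝ), Qᵀ * Q = 1 →
      ∃ i : Fin m ⊕ Fin m,
        η / 2 ≤ vnorm (fun j =>
          (X i j + (if i = Sum.inl k then
            η * ((vnorm (X (Sum.inl k)))⁻¹ * X (Sum.inl k) j) else 0)) -
          (Q.mulVec (X i) j + w j)) := by
  intro Q w hQ
  by_contra hcon
  push_neg at hcon
  set a : Fin p → ℝ := X (Sum.inl k) with ha
  set na : ℝ := vnorm a with hna
  have hXneg : X (Sum.inr k) = -a := by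
    funext j; exact hsym k j
  have hnapos : 0 < na := by
    rw [hna, vnorm_eq]
    rw [norm_pos_iff]
    intro h0
    apply hXk
    have : toE a = 0 := h0
    funext j
    have := congrFun (congrArg (WithLp.equiv 2 (Fin p → ℝ)) this) j
    simpa [toE] using this
  set A : EuclideanSpace ℝ (Fin p) := toE a with hA
  set B : EuclideanSpace ℝ (Fin p) := toE (Q *ᵥ a) with hB
  set W : EuclideanSpace ℝ (Fin p) := toE w with hW
  have h1 := hcon (Sum.inl k)
  have h2 := hcon (Sum.inr k)
  have e1 : toE (fun j => (X (Sum.inl k) j + (if (Sum.inl k : Fin m ⊕ Fin m) = Sum.inl k then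
            η * ((vnorm (X (Sum.inl k)))⁻¹ * X (Sum.inl k) j) else 0)) -
          (Q.mulVec (X (Sum.inl k)) j + w j)) = (1 + η * na⁻¹) • A - B - W := by
    ext j
    simp [toE, A, B, W, ← ha, ← hna, PiLp.sub_apply, PiLp.smul_apply, WithLp.equiv_symm_apply, PiLp.toLp_apply,
      smul_eq_mul]
    ring
  have e2 : toE (fun j => (X (Sum.inr k) j + (if (Sum.inr k : Fin m ⊕ Fin m) = Sum.inl k then
            η * ((vnorm (X (Sum.inl k)))⁻¹ * X (Sum.inl k) j) else 0)) -
          (Q.mulVec (X (Sum.inr k)) j + w j)) = -A + B - W := by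
    ext j
    simp [toE, A, B, W, hXneg, Matrix.mulVec_neg, PiLp.sub_apply, PiLp.add_apply,
      PiLp.neg_apply, WithLp.equiv_symm_apply, PiLp.toLp_apply]
    ring
  rw [vnorm_eq, e1] at h1
  rw [vnorm_eq, e2] at h2
  have hnormA : ‖A‖ = na := (vnorm_eq a).symm
  have hnormB : ‖B‖ = na := by
    rw [hB, ← vnorm_eq, vnorm_mulVec Q hQ]
  have hdiff : ((1 + η * na⁻¹) • A - B - W) - (-A + B - W) = (2 + η * na⁻¹) • A - (2:ℝ) • B := by
    module
  have hlow : η ≤ ‖((1 + η * na⁻¹) • A - B - W) - (-A + B - W)‖ := by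
    rw [hdiff]
    have := norm_sub_norm_le ((2 + η * na⁻¹) • A) ((2:ℝ) • B)
    rw [norm_smul, norm_smul, hnormA, hnormB, Real.norm_eq_abs, Real.norm_eq_abs] at this
    have h2pos : (0:ℝ) < 2 + η * na⁻¹ := by positivity
    rw [abs_of_pos h2pos, abs_of_pos (by norm_num : (0:ℝ) < 2)] at this
    have : (2 + η * na⁻¹) * na - 2 * na ≤ _ := this
    have hval : (2 + η * na⁻¹) * na - 2 * na = η := by
      field_simp
      ring
    linarith [this, hval ▸ this]
  have htri : ‖((1 + η * na⁻¹) • A - B - W) - (-A + B - W)‖ ≤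
      ‖(1 + η * na⁻¹) • A - B - W‖ + ‖-A + B - W‖ := norm_sub_le _ _
  linarith
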